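/- A monoid M is Markov as a semigroup if and only if it is Markov as a monoid. -/

import Mathlib

open Function

/-- A language is regular if it is accepted by a deterministic finite automaton
with a finite state set. -/
def RegularLang {A : Type} (L : Language A) : Prop :=
  ∃ (Q : Type) (_ : Fintype Q) (M : DFA A Q), M.accepts = L

/-- The product of a nonempty word under the letter-assignment `φ`; the empty
word is sent to `none`. This is the induced map `φ⁺` on nonempty words. -/
def prodPlus {A S : Type} [Semigroup S] (φ : A → S) : List A → Option S
  | [] => none
  | a :: w => some (w.foldl (fun s b => s * φ b) (φ a))

/-- The induced monoid homomorphism `φ*` from the free monoid of words. -/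
def monProd {A M : Type} [Monoid M] (φ : A → M) (w : List A) : M :=
  (w.map φ).prod

/-- A semigroup Markov language for `S` over `A` (with respect to `φ`): a regular,
`+`-prefix-closed language of nonempty words mapping bijectively onto `S` under `φ⁺`. -/
structure IsSgMarkovLang {A S : Type} [Semigroup S] (φ : A → S) (L : Language A) : Prop where
  regular : RegularLang L
  not_empty_mem : [] ∉ L
  plus_prefix_closed : ∀ u v : List A, u ≠ [] → v ≠ [] → u ++ v ∈ L → u ∈ L
  unique_rep : ∀ s : S, ∃! w : List A, w ∈ L ∧ prodPlus φ w = some s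

/-- A robust semigroup Markov language: additionally every word of `L` has minimal
length among (nonempty) words representing the same element. -/
structure IsRobustSgMarkovLang {A S : Type} [Semigroup S] (φ : A → S) (L : Language A)
    extends IsSgMarkovLang φ L : Prop where
  min_length : ∀ w ∈ L, ∀ v : List A, prodPlus φ v = prodPlus φ w → w.length ≤ v.length

/-- A monoid Markov language for `M` over `A` (with respect to `φ`): a regular,
prefix-closed language mapping bijectively onto `M` under `φ*`. -/
structure IsMonMarkovLang {A M : Type} [Monoid M] (φ : A → M) (L : Language A) : Prop where
  regular : RegularLang L
  prefix_closed : ∀ u v : List A, u ++ v ∈ L → u ∈ L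
  unique_rep : ∀ m : M, ∃! w : List A, w ∈ L ∧ monProd φ w = m

/-- A robust monoid Markov language: additionally every word of `L` has minimal
length among words representing the same element. -/
structure IsRobustMonMarkovLang {A M : Type} [Monoid M] (φ : A → M) (L : Language A)
    extends IsMonMarkovLang φ L : Prop where
  min_length : ∀ w ∈ L, ∀ v : List A, monProd φ v = monProd φ w → w.length ≤ v.length

/-- `S` is Markov as a semigroup. -/
def SgMarkov (S : Type) [Semigroup S] : Prop :=
  ∃ (A : Type) (_ : Fintype A) (φ : A → S),
    (∀ s : S, ∃ w : List A, prodPlus φ w = some s) ∧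
    ∃ L : Language A, IsSgMarkovLang φ L

/-- `S` is robustly Markov (as a semigroup) with respect to some alphabet. -/
def SgRobustlyMarkov (S : Type) [Semigroup S] : Prop :=
  ∃ (A : Type) (_ : Fintype A) (φ : A → S),
    (∀ s : S, ∃ w : List A, prodPlus φ w = some s) ∧
    ∃ L : Language A, IsRobustSgMarkovLang φ L

/-- `S` is strongly Markov (as a semigroup). -/
def SgStronglyMarkov (S : Type) [Semigroup S] : Prop :=
  ∀ (A : Type) [Fintype A] (φ : A → S),
    (∀ s : S, ∃ w : List A, prodPlus φ w = some s) →
    ∃ L : Language A, IsRobustSgMarkovLang φ L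

/-- `M` is Markov as a monoid. -/
def MonMarkov (M : Type) [Monoid M] : Prop :=
  ∃ (A : Type) (_ : Fintype A) (φ : A → M),
    Surjective (monProd φ) ∧ ∃ L : Language A, IsMonMarkovLang φ L

/-- `M` is robustly Markov (as a monoid) with respect to some alphabet. -/
def MonRobustlyMarkov (M : Type) [Monoid M] : Prop :=
  ∃ (A : Type) (_ : Fintype A) (φ : A → M),
    Surjective (monProd φ) ∧ ∃ L : Language A, IsRobustMonMarkovLang φ L

/-- `M` is strongly Markov (as a monoid). -/
def MonStronglyMarkov (M : Type) [Monoid M] : Prop :=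
  ∀ (A : Type) [Fintype A] (φ : A → M),
    Surjective (monProd φ) →
    ∃ L : Language A, IsRobustMonMarkovLang φ L


section Helpers
variable {A M : Type} [Monoid M]

lemma foldl_mul_eq (φ : A → M) :
    ∀ (t : List A) (x : M), t.foldl (fun s b => s * φ b) x = x * (t.map φ).prod := by
  intro t
  induction t with
  | nil => intro x; simp
  | cons a t ih => intro x; simp [ih, mul_assoc]

lemma prodPlus_eq_monProd (φ : A → M) (w : List A) (h : w ≠ []) :
    prodPlus φ w = some (monProd φ w) := by
  cases w with
  | nil => exact absurd rfl h
  | cons a t => simp [prodPlus, monProd, foldl_mul_eq]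

lemma prodPlus_some (φ : A → M) {w : List A} {s : M} (h : prodPlus φ w = some s) :
    w ≠ [] ∧ monProd φ w = s := by
  have hw : w ≠ [] := by
    intro h0; rw [h0] at h; simp [prodPlus] at h
  rw [prodPlus_eq_monProd φ w hw] at h
  exact ⟨hw, Option.some.inj h⟩

lemma monProd_append (φ : A → M) (u v : List A) :
    monProd φ (u ++ v) = monProd φ u * monProd φ v := by
  simp [monProd]

lemma monProd_nil (φ : A → M) : monProd φ [] = 1 := rfl

end Helpers


section MonToSgDFA
variable {A : Type} {Q : Type} (D : DFA A Q)

def sgStep : Option (Q ⊕ Bool) → (A ⊕ Unit) → Option (Q ⊕ Bool)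
  | none, Sum.inl a => some (Sum.inl (D.step D.start a))
  | none, Sum.inr _ => some (Sum.inr true)
  | some (Sum.inl q), Sum.inl a => some (Sum.inl (D.step q a))
  | some (Sum.inl _), Sum.inr _ => some (Sum.inr false)
  | some (Sum.inr _), _ => some (Sum.inr false)

def sgDFA : DFA (A ⊕ Unit) (Option (Q ⊕ Bool)) where
  step := sgStep D
  start := none
  accept := {s | (∃ q ∈ D.accept, s = some (Sum.inl q)) ∨ s = some (Sum.inr true)}

def sgF (w : List (A ⊕ Unit)) : Option (Q ⊕ Bool) :=
  if w.isEmpty then none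
  else if w.all Sum.isLeft then some (Sum.inl (D.eval (w.filterMap Sum.getLeft?)))
  else if w.length = 1 then some (Sum.inr true)
  else some (Sum.inr false)

lemma eval_append_singleton {B S : Type} (E : DFA B S) (w : List B) (x : B) :
    E.eval (w ++ [x]) = E.step (E.eval w) x := by
  simp [DFA.eval, DFA.evalFrom, List.foldl_append]

lemma sgF_eval (w : List (A ⊕ Unit)) : (sgDFA D).eval w = sgF D w := by
  induction w using List.reverseRecOn with
  | nil => rfl
  | append_singleton w x ih =>
    rw [eval_append_singleton, ih]
    have hne : ¬ (w ++ [x]).isEmpty = true := by simp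
    rcases eq_or_ne w [] with rfl | hw
    · cases x with
      | inl a => simp [sgF, sgDFA, sgStep, DFA.eval, DFA.evalFrom]
      | inr u => cases u; simp [sgF, sgDFA, sgStep]
    · have hlen : ¬ (w ++ [x]).length = 1 := by
        simp only [List.length_append, List.length_singleton]
        intro h
        exact hw (List.eq_nil_of_length_eq_zero (by omega))
      by_cases hall : w.all Sum.isLeft
      · have hmem : ∀ y ∈ w, Sum.isLeft y = true := List.all_eq_true.mp hall
        cases x with
        | inl a =>
          have hall' : (w ++ [Sum.inl a]).all Sum.isLeft := by
            rw [List.all_eq_true]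
            intro y hy
            rcases List.mem_append.mp hy with h | h
            · exact hmem y h
            · simp at h; simp [h]
          have hfm : (w ++ [Sum.inl a]).filterMap Sum.getLeft? =
              w.filterMap Sum.getLeft? ++ [a] := by
            simp [List.filterMap_append]
          simp only [sgF, if_neg hne, if_pos hall',
            if_neg (by simp [List.isEmpty_iff, hw] : ¬ w.isEmpty = true), if_pos hall, hfm]
          rw [eval_append_singleton]
          rfl
        | inr u =>
          cases u
          have hnall : ¬ (w ++ [Sum.inr ()]).all Sum.isLeft = true := by
            rw [List.all_eq_true]
            intro h
            have := h (Sum.inr ()) (by simp)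
            simp at this
          simp only [sgF, if_neg hne, if_neg hnall, if_neg hlen,
            if_neg (by simp [List.isEmpty_iff, hw] : ¬ w.isEmpty = true), if_pos hall]
          rfl
      · have hnall : ¬ (w ++ [x]).all Sum.isLeft = true := by
          rw [List.all_eq_true]
          intro h
          exact hall (List.all_eq_true.mpr (fun y hy => h y (List.mem_append.mpr (Or.inl hy))))
        simp only [sgF, if_neg hne, if_neg hnall, if_neg hlen,
          if_neg (by simp [List.isEmpty_iff, hw] : ¬ w.isEmpty = true), if_neg hall]
        by_cases hl1 : w.length = 1
        · rw [if_pos hl1]; cases x <;> rfl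
        · rw [if_neg hl1]; cases x <;> rfl

lemma all_left_eq_map (w : List (A ⊕ Unit)) (h : ∀ y ∈ w, Sum.isLeft y = true) :
    w = (w.filterMap Sum.getLeft?).map Sum.inl := by
  induction w with
  | nil => rfl
  | cons y t iht =>
    rcases y with a | u
    · have hga : Sum.getLeft? (Sum.inl a : A ⊕ Unit) = some a := rfl
      rw [List.filterMap_cons, hga, List.map_cons]
      exact congrArg (List.cons (Sum.inl a)) (iht (fun z hz => h z (by simp [hz])))
    · have := h (Sum.inr u) (by simp); simp at this

lemma sgDFA_accepts (L : Language A) (hL : D.accepts = L) :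
    (sgDFA D).accepts = {w | (∃ u : List A, u ∈ L ∧ u ≠ [] ∧ w = u.map Sum.inl) ∨
      w = [Sum.inr ()]} := by
  ext w
  rw [DFA.mem_accepts]
  change (sgDFA D).eval w ∈ (sgDFA D).accept ↔ _
  rw [sgF_eval]
  constructor
  · intro hmem
    by_cases h0 : w.isEmpty = true
    · exfalso
      rcases hmem with ⟨q, hq, hfw⟩ | hfw <;> rw [sgF, if_pos h0] at hfw <;> simp at hfw
    · by_cases h1 : w.all Sum.isLeft = true
      · have hfw : sgF D w = some (Sum.inl (D.eval (w.filterMap Sum.getLeft?))) := by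
          rw [sgF, if_neg h0, if_pos h1]
        have hmemw : ∀ y ∈ w, Sum.isLeft y = true := List.all_eq_true.mp h1
        have hwmap := all_left_eq_map w hmemw
        rcases hmem with ⟨q, hq, heq⟩ | heq
        · left
          rw [hfw] at heq
          simp only [Option.some.injEq, Sum.inl.injEq] at heq
          refine ⟨w.filterMap Sum.getLeft?, ?_, ?_, hwmap⟩
          · rw [← hL, DFA.mem_accepts, heq]; exact hq
          · intro h
            rw [h, List.map_nil] at hwmap
            rw [hwmap] at h0; simp at h0
        · rw [hfw] at heq; simp at heq
      · by_cases h2 : w.length = 1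
        · right
          cases w with
          | nil => simp at h0
          | cons y t =>
            have ht : t = [] := by
              simp only [List.length_cons] at h2
              exact List.eq_nil_of_length_eq_zero (by omega)
            subst ht
            rcases y with a | u
            · exfalso; apply h1; simp
            · cases u; rfl
        · exfalso
          have hfw : sgF D w = some (Sum.inr false) := by
            rw [sgF, if_neg h0, if_neg h1, if_neg h2]
          rcases hmem with ⟨q, hq, heq⟩ | heq <;> rw [hfw] at heq <;> simp at heq
  · rintro (⟨u, huL, hune, rfl⟩ | rfl)
    · left
      refine ⟨D.eval u, by rw [← hL, DFA.mem_accepts] at huL; exact huL, ?_⟩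
      unfold sgF
      have h0 : ¬ (u.map (Sum.inl (β := Unit))).isEmpty = true := by
        simp [List.isEmpty_iff, hune]
      have h1 : (u.map (Sum.inl (β := Unit))).all Sum.isLeft = true := by
        rw [List.all_eq_true]
        intro x hx; rcases List.mem_map.mp hx with ⟨a, _, rfl⟩; rfl
      rw [if_neg h0, if_pos h1]
      congr 2
      have : (Sum.getLeft? (β := Unit)) ∘ (Sum.inl : A → A ⊕ Unit) = some := rfl
      rw [List.filterMap_map, this, List.filterMap_some]
    · right
      unfold sgF
      norm_num


theorem mon_to_sg {M : Type} [Monoid M] (h : MonMarkov M) : SgMarkov M := by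
  obtain ⟨A, hA, φ, hsurj, L, hL⟩ := h
  have hnilL : [] ∈ L := by
    obtain ⟨w, ⟨hwL, _⟩, _⟩ := hL.unique_rep 1
    exact hL.prefix_closed [] w hwL
  have hnil_unique : ∀ w ∈ L, monProd φ w = 1 → w = [] := by
    intro w hwL hw1
    obtain ⟨u, _, hu⟩ := hL.unique_rep 1
    rw [hu w ⟨hwL, hw1⟩, hu [] ⟨hnilL, rfl⟩]
  refine ⟨A ⊕ Unit, inferInstance, Sum.elim φ (fun _ => 1), ?_, ?_⟩
  · -- surjectivity of prodPlus
    intro s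
    refine ⟨Sum.inr () :: (Classical.choose (hsurj s)).map Sum.inl, ?_⟩
    rw [prodPlus_eq_monProd _ _ (by simp)]
    congr 1
    have hc := Classical.choose_spec (hsurj s)
    simp only [monProd, List.map_cons, Sum.elim_inr, List.map_map, List.prod_cons]
    rw [one_mul]
    have : (Sum.elim φ (fun _ => (1 : M))) ∘ (Sum.inl : A → A ⊕ Unit) = φ := rfl
    rw [this]
    exact hc
  · -- the language
    refine ⟨{w | (∃ u : List A, u ∈ L ∧ u ≠ [] ∧ w = u.map Sum.inl) ∨ w = [Sum.inr ()]}, ?_, ?_, ?_, ?_⟩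
    · -- regular
      obtain ⟨Q, hQ, D, hD⟩ := hL.regular
      exact ⟨Option (Q ⊕ Bool), inferInstance, sgDFA D, sgDFA_accepts D L hD⟩
    · -- [] not in it
      rintro (⟨u, _, hune, hmap⟩ | h)
      · exact hune (by simpa using hmap.symm)
      · cases h
    · -- plus prefix closed
      rintro u v hu hv (⟨t, htL, htne, hmap⟩ | h)
      · left
        have : ∃ t1 t2 : List A, t = t1 ++ t2 ∧ u = t1.map Sum.inl ∧ v = t2.map Sum.inl := by
          refine ⟨(t.take u.length), (t.drop u.length), (List.take_append_drop _ _).symm, ?_, ?_⟩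
          · rw [List.map_take, ← hmap, List.take_left]
          · rw [List.map_drop, ← hmap, List.drop_left]
        obtain ⟨t1, t2, rfl, rfl, rfl⟩ := this
        have ht1 : t1 ≠ [] := by intro h; rw [h] at hu; exact hu rfl
        have ht2 : t2 ≠ [] := by intro h; rw [h] at hv; exact hv rfl
        exact ⟨t1, hL.prefix_closed t1 t2 htL, ht1, rfl⟩
      · exfalso
        have := congrArg List.length h
        simp only [List.length_append, List.length_singleton] at this
        have hu1 : u.length ≥ 1 := List.length_pos_iff.mpr hu
        have hv1 : v.length ≥ 1 := List.length_pos_iff.mpr hv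
        omega
    · -- unique rep
      intro s
      by_cases hs : s = 1
      · subst hs
        refine ⟨[Sum.inr ()], ⟨Or.inr rfl, by simp [prodPlus]⟩, ?_⟩
        rintro w ⟨⟨t, htL, htne, rfl⟩ | rfl, hpp⟩
        · exfalso
          obtain ⟨hwne, hmp⟩ := prodPlus_some _ hpp
          have : monProd φ t = 1 := by
            rw [← hmp]
            simp only [monProd, List.map_map]
            rfl
          exact htne (hnil_unique t htL this)
        · rfl
      · obtain ⟨u, ⟨huL, humP⟩, huniq⟩ := hL.unique_rep s
        have hune : u ≠ [] := by
          intro h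
          rw [h, monProd_nil] at humP
          exact hs humP.symm
        refine ⟨u.map Sum.inl, ⟨Or.inl ⟨u, huL, hune, rfl⟩, ?_⟩, ?_⟩
        · rw [prodPlus_eq_monProd _ _ (by simpa using hune)]
          congr 1
          rw [← humP]
          simp only [monProd, List.map_map]
          rfl
        · rintro w ⟨⟨t, htL, htne, rfl⟩ | rfl, hpp⟩
          · obtain ⟨hwne, hmp⟩ := prodPlus_some _ hpp
            have hts : monProd φ t = s := by
              rw [← hmp]; simp only [monProd, List.map_map]; rfl
            rw [huniq t ⟨htL, hts⟩]
          · exfalso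
            apply hs
            obtain ⟨_, hmp⟩ := prodPlus_some _ hpp
            rw [← hmp]; simp [monProd]


attribute [local instance] Classical.propDecidable

section SgToMonDFA
variable {A : Type} {Q : Type}

/-- Boundary lemma: a prefix of `w ++ [a]` is a prefix of `w` or equals `w ++ [a]`. -/
lemma prefix_snoc {u w : List A} {a : A} (h : u <+: w ++ [a]) : u <+: w ∨ u = w ++ [a] := by
  rcases Nat.lt_or_ge u.length (w ++ [a]).length with hlt | hge
  · left
    have hle : u.length ≤ w.length := by
      simp only [List.length_append, List.length_singleton] at hlt; omega
    have hh := List.prefix_iff_eq_take.mp h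
    rw [List.take_append_of_le_length hle] at hh
    exact List.prefix_iff_eq_take.mpr hh
  · right
    exact h.eq_of_length (le_antisymm h.length_le hge)

variable (w₁ : List A)

noncomputable def pst (w : List A) : Option (Fin (w₁.length + 1)) :=
  if w₁ <+: w then some (Fin.last w₁.length)
  else if h : w <+: w₁ then some ⟨w.length, by have := h.length_le; omega⟩
  else none

noncomputable def pstep : Option (Fin (w₁.length + 1)) → A → Option (Fin (w₁.length + 1))
  | none, _ => none
  | some i, a =>
    if h : (i : ℕ) < w₁.length then
      (if w₁.get ⟨i, h⟩ = a then some ⟨(i : ℕ) + 1, by omega⟩ else none)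
    else some i

lemma pst_snoc (w : List A) (a : A) : pst w₁ (w ++ [a]) = pstep w₁ (pst w₁ w) a := by
  by_cases h1 : w₁ <+: w
  · have h1' : w₁ <+: w ++ [a] := h1.trans (w.prefix_append [a])
    have hw : pst w₁ w = some (Fin.last w₁.length) := by rw [pst, if_pos h1]
    rw [hw, pst, if_pos h1']
    simp [pstep, Fin.last]
  · by_cases h2 : w <+: w₁
    · have hlt : w.length < w₁.length := by
        rcases lt_or_eq_of_le h2.length_le with h | h
        · exact h
        · exact absurd (by rw [h2.eq_of_length h]) h1
      have hw : pst w₁ w = some ⟨w.length, by omega⟩ := by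
        rw [pst, if_neg h1, dif_pos h2]
      have htake : w₁.take w.length = w := (List.prefix_iff_eq_take.mp h2).symm
      have htS : w₁.take (w.length + 1) = w ++ [w₁.get ⟨w.length, hlt⟩] := by
        rw [List.take_succ, htake]
        congr 1
        rw [List.getElem?_eq_getElem hlt]
        rfl
      rw [hw, pstep, dif_pos hlt]
      by_cases hga : w₁.get ⟨w.length, hlt⟩ = a
      · rw [if_pos hga]
        rw [hga] at htS
        have hpre : w ++ [a] <+: w₁ := by
          rw [List.prefix_iff_eq_take, List.length_append, List.length_singleton, htS]
      
        by_cases hp1 : w₁ <+: w ++ [a]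
        · have heq : w₁ = w ++ [a] := hp1.eq_of_length
            (le_antisymm hp1.length_le hpre.length_le)
          have hn : w₁.length = w.length + 1 := by rw [heq]; simp
          rw [pst, if_pos hp1]
          congr 1
          ext
          simp [Fin.last, hn]
        · rw [pst, if_neg hp1, dif_pos hpre]
          simp
      · rw [if_neg hga]
        have hnp2 : ¬ w ++ [a] <+: w₁ := by
          intro h
          apply hga
          have h3 : w₁.take (w.length + 1) = w ++ [a] := by
            have := List.prefix_iff_eq_take.mp h
            rw [List.length_append, List.length_singleton] at this
            exact this.symm
          have h4 : w ++ [w₁.get ⟨w.length, hlt⟩] = w ++ [a] := by rw [← htS, h3]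
          have h5 := List.append_cancel_left h4
          simpa using h5
        have hnp1 : ¬ w₁ <+: w ++ [a] := by
          intro h
          rcases prefix_snoc h with h | h
          · exact h1 h
          · exact hnp2 (h ▸ List.prefix_refl _)
        rw [pst, if_neg hnp1, dif_neg hnp2]
    · have hw : pst w₁ w = none := by rw [pst, if_neg h1, dif_neg h2]
      have hnp2 : ¬ w ++ [a] <+: w₁ := fun h => h2 ((w.prefix_append [a]).trans h)
      have hnp1 : ¬ w₁ <+: w ++ [a] := by
        intro h
        rcases prefix_snoc h with h | h
        · exact h1 h
        · exact h2 (h ▸ (w.prefix_append [a]))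
      rw [hw, pst, if_neg hnp1, dif_neg hnp2]
      rfl

variable (D : DFA A Q) (s₁ : Q)

noncomputable def monDFA : DFA A (Bool × Option (Fin (w₁.length + 1)) × Q × Q) where
  step := fun s a => (false, pstep w₁ s.2.1 a, D.step s.2.2.1 a, D.step s.2.2.2 a)
  start := (true, pst w₁ [], D.start, s₁)
  accept := {s | s.1 = true ∨ (s.2.2.1 ∈ D.accept ∧ s.2.1 ≠ some (Fin.last w₁.length)) ∨
      s.2.2.2 ∈ D.accept}

lemma monDFA_eval (w : List A) :
    (monDFA w₁ D s₁).eval w = (w.isEmpty, pst w₁ w, D.eval w, D.evalFrom s₁ w) := by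
  induction w using List.reverseRecOn with
  | nil => rfl
  | append_singleton w a ih =>
    have hstep : (monDFA w₁ D s₁).eval (w ++ [a]) =
        (monDFA w₁ D s₁).step ((monDFA w₁ D s₁).eval w) a := by
      simp [DFA.eval, DFA.evalFrom, List.foldl_append]
    rw [hstep, ih]
    have e1 : D.eval (w ++ [a]) = D.step (D.eval w) a := by
      simp [DFA.eval, DFA.evalFrom, List.foldl_append]
    have e2 : D.evalFrom s₁ (w ++ [a]) = D.step (D.evalFrom s₁ w) a := by
      simp [DFA.evalFrom, List.foldl_append]
    rw [pst_snoc, e1, e2]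
    simp [monDFA]

lemma pst_eq_last_iff (w : List A) :
    pst w₁ w = some (Fin.last w₁.length) ↔ w₁ <+: w := by
  constructor
  · intro h
    by_cases h1 : w₁ <+: w
    · exact h1
    · exfalso
      rw [pst, if_neg h1] at h
      by_cases h2 : w <+: w₁
      · rw [dif_pos h2] at h
        have hv : w.length = w₁.length := by
          have := Option.some.inj h
          have := congrArg Fin.val this
          simpa [Fin.last] using this
        exact h1 (h2.eq_of_length hv ▸ List.prefix_refl _)
      · rw [dif_neg h2] at h
        cases h
  · intro h1
    rw [pst, if_pos h1]

lemma monDFA_accepts (L : Language A) (hD : D.accepts = L) :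
    (monDFA w₁ D (D.eval w₁)).accepts =
      {w | w = [] ∨ (w ∈ L ∧ ¬ w₁ <+: w) ∨ w₁ ++ w ∈ L} := by
  ext w
  rw [DFA.mem_accepts]
  change (monDFA w₁ D (D.eval w₁)).eval w ∈ (monDFA w₁ D (D.eval w₁)).accept ↔ _
  rw [monDFA_eval]
  have hq2 : D.evalFrom (D.eval w₁) w ∈ D.accept ↔ w₁ ++ w ∈ L := by
    rw [← hD, DFA.mem_accepts]
    change _ ↔ D.evalFrom D.start (w₁ ++ w) ∈ D.accept
    rw [DFA.evalFrom_of_append]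
    rfl
  have hq1 : D.eval w ∈ D.accept ↔ w ∈ L := by rw [← hD, DFA.mem_accepts]
  constructor
  · rintro (h | ⟨hacc, hne⟩ | h)
    · left; simpa [List.isEmpty_iff] using h
    · right; left
      exact ⟨hq1.mp hacc, fun hp => hne ((pst_eq_last_iff w₁ w).mpr hp)⟩
    · right; right; exact hq2.mp h
  · rintro (rfl | ⟨hL', hnp⟩ | h)
    · left; rfl
    · right; left
      exact ⟨hq1.mpr hL', fun he => hnp ((pst_eq_last_iff w₁ w).mp he)⟩
    · right; right; exact hq2.mpr h

end SgToMonDFA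

theorem sg_to_mon {M : Type} [Monoid M] (h : SgMarkov M) : MonMarkov M := by
  obtain ⟨A, hA, φ, hsurj, L, hL⟩ := h
  obtain ⟨w₁, ⟨hw₁L, hw₁p⟩, hw₁u⟩ := hL.unique_rep 1
  obtain ⟨hw₁ne, hw₁m⟩ := prodPlus_some φ hw₁p
  have hLne : ∀ w ∈ L, w ≠ [] := by
    intro w hw h0
    rw [h0] at hw
    exact hL.not_empty_mem hw
  refine ⟨A, hA, φ, ?_, ?_⟩
  · intro m
    obtain ⟨w, hw⟩ := hsurj m
    exact ⟨w, (prodPlus_some φ hw).2⟩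
  · refine ⟨{w | w = [] ∨ (w ∈ L ∧ ¬ w₁ <+: w) ∨ w₁ ++ w ∈ L}, ?_, ?_, ?_⟩
    · -- regular
      obtain ⟨Q, hQ, D, hD⟩ := hL.regular
      exact ⟨Bool × Option (Fin (w₁.length + 1)) × Q × Q, inferInstance,
        monDFA w₁ D (D.eval w₁), monDFA_accepts w₁ D L hD⟩
    · -- prefix closed
      intro u v hmem
      by_cases hu : u = []
      · left; exact hu
      · by_cases hv : v = []
        · rw [hv, List.append_nil] at hmem; exact hmem
        · rcases hmem with h0 | ⟨hinL, hnp⟩ | hq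
          · exact absurd (List.append_eq_nil_iff.mp h0).1 hu
          · right; left
            exact ⟨hL.plus_prefix_closed u v hu hv hinL,
              fun hp => hnp (hp.trans (u.prefix_append v))⟩
          · right; right
            rw [← List.append_assoc] at hq
            exact hL.plus_prefix_closed (w₁ ++ u) v (by simp [hw₁ne]) hv hq
    · -- unique representatives
      intro m
      obtain ⟨w, ⟨hwL, hwp⟩, hwu⟩ := hL.unique_rep m
      obtain ⟨hwne, hwm⟩ := prodPlus_some φ hwp
      by_cases hp : w₁ <+: w
      · obtain ⟨c, rfl⟩ := hp
        have hcm : monProd φ c = m := by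
          rw [← hwm, monProd_append, hw₁m, one_mul]
        refine ⟨c, ⟨Or.inr (Or.inr hwL), hcm⟩, ?_⟩
        rintro y ⟨hymem, hym⟩
        rcases hymem with rfl | ⟨hyL, hynp⟩ | hyq
        · -- y = [], so m = 1, so w₁ ++ c = w₁, so c = []
          have hm1 : m = 1 := by rw [← hym, monProd_nil]
          have : w₁ ++ c = w₁ := hw₁u (w₁ ++ c)
            ⟨hwL, by rw [prodPlus_eq_monProd φ _ (by simp [hw₁ne]), hwm, hm1]⟩
          have := congrArg List.length this
          simp only [List.length_append] at this
          exact (List.eq_nil_of_length_eq_zero (by omega)).symm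
        · exfalso
          have hy : y = w₁ ++ c := hwu y
            ⟨hyL, by rw [prodPlus_eq_monProd φ _ (hLne y hyL), hym]⟩
          exact hynp (hy ▸ (w₁.prefix_append c))
        · have : w₁ ++ y = w₁ ++ c := hwu (w₁ ++ y)
            ⟨hyq, by
              rw [prodPlus_eq_monProd φ _ (by simp [hw₁ne]), monProd_append, hw₁m, one_mul, hym]⟩
          exact List.append_cancel_left this
      · refine ⟨w, ⟨Or.inr (Or.inl ⟨hwL, hp⟩), hwm⟩, ?_⟩
        rintro y ⟨hymem, hym⟩
        rcases hymem with rfl | ⟨hyL, hynp⟩ | hyq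
        · exfalso
          have hm1 : m = 1 := by rw [← hym, monProd_nil]
          have hww : w = w₁ := hw₁u w
            ⟨hwL, by rw [prodPlus_eq_monProd φ _ hwne, hwm, hm1]⟩
          exact hp (hww ▸ List.prefix_refl w₁)
        · exact hwu y ⟨hyL, by rw [prodPlus_eq_monProd φ _ (hLne y hyL), hym]⟩
        · exfalso
          have : w₁ ++ y = w := hwu (w₁ ++ y)
            ⟨hyq, by
              rw [prodPlus_eq_monProd φ _ (by simp [hw₁ne]), monProd_append, hw₁m, one_mul, hym]⟩
          exact hp (this ▸ (w₁.prefix_append y))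

/-- A monoid is Markov as a semigroup iff it is Markov as a monoid. -/
theorem stmt2 {M : Type} [Monoid M] : SgMarkov M ↔ MonMarkov M :=
  ⟨sg_to_mon, mon_to_sg⟩
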